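/- arXiv:2211.03722 — 2 statements merged into one kernel-verified Lean document; each statement's English description precedes it below -/
import Mathlib

section
/- Let a ∈ O_L with ϖ ∣ a. If x, y ∈ Λ satisfy H_m·(x, y)ᵀ ≡ (0, 0)ᵀ (mod ω_m·Λ) for every m ≥ 1, then x = y = 0. The same holds with Λ replaced by (O_L/ϖ^n O_L)[[X]] for any n ≥ 1, with a, Φ_j, ω_m replaced by their images. (This is the injectivity underlying the isomorphisms (3.2)–(3.3) of the paper, and it gives the uniqueness in Theorem 3.3.) -/
/-!
Setting: `p ≥ 5` a prime, `𝕆` the ring of integers of a finite extension of `ℚ_p`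
(modelled as a characteristic-zero discrete valuation ring) with uniformizer `ϖ`
satisfying `ϖ ∣ p`, and `Λ = 𝕆⟦X⟧`.
-/

open PowerSeries

/-- `ω_m = (1+X)^{p^m} − 1`. -/
noncomputable def omegaPS (p : ℕ) (R : Type*) [CommRing R] (m : ℕ) : PowerSeries R :=
  (1 + PowerSeries.X) ^ (p ^ m) - 1

/-- `Φ_m = Σ_{i<p} (1+X)^{i·p^{m−1}}` (meaningful for `m ≥ 1`). -/
noncomputable def PhiPS (p : ℕ) (R : Type*) [CommRing R] (m : ℕ) : PowerSeries R :=
  ∑ i ∈ Finset.range p, (1 + PowerSeries.X) ^ (i * p ^ (m - 1))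

/-- The matrix `C_j = ((a, 1), (−Φ_j, 0))`. -/
noncomputable def Cmat (p : ℕ) (R : Type*) [CommRing R] (a : R) (j : ℕ) :
    Matrix (Fin 2) (Fin 2) (PowerSeries R) :=
  !![PowerSeries.C (R := R) a, 1; -(PhiPS p R j), 0]

/-- `H_m = C_m · C_{m−1} ⋯ C_1` (with `H_0 = 1`). -/
noncomputable def Hmat (p : ℕ) (R : Type*) [CommRing R] (a : R) :
    ℕ → Matrix (Fin 2) (Fin 2) (PowerSeries R)
  | 0 => 1
  | m + 1 => Cmat p R a (m + 1) * Hmat p R a m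

def Aexp (p j : ℕ) : ℕ := ∑ t ∈ Finset.range j, (p ^ (2*t+1) - p ^ (2*t))
def Bexp (p j : ℕ) : ℕ := ∑ t ∈ Finset.range j, (p ^ (2*t+2) - p ^ (2*t+1))

section ineq
variable (p : ℕ) (hp : 2 ≤ p)
include hp

lemma pow_facts (j : ℕ) :
    p^(2*(j+1)) = p^(2*j) * p * p ∧ p^(2*j+1) = p^(2*j) * p ∧ p^(j+1) = p^j * p ∧
    p^j * p^j = p^(2*j) ∧ p^(2*j+2) = p^(2*j) * p * p ∧ 1 ≤ p ^ j := by
  refine ⟨?_, (pow_succ p (2*j)), pow_succ p j, ?_, ?_, Nat.one_le_pow _ _ (by omega)⟩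
  · rw [show 2*(j+1) = 2*j+1+1 by omega, pow_succ, pow_succ]
  · rw [← pow_add, show j + j = 2*j by omega]
  · rw [show 2*j+2 = 2*j+1+1 by omega, pow_succ, pow_succ]

lemma Aexp_le : ∀ j, Aexp p j + p ^ j ≤ p ^ (2*j) := by
  intro j
  induction j with
  | zero => simp [Aexp]
  | succ j ih =>
    rw [Aexp, Finset.sum_range_succ, ← Aexp]
    obtain ⟨e1, e2, e3, e4, e5, e6⟩ := pow_facts p hp j
    have hsub : p^(2*j+1) - p^(2*j) + p^(2*j) = p^(2*j+1) :=
      Nat.sub_add_cancel (Nat.pow_le_pow_right (by omega) (by omega))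
    nlinarith [ih, hsub, e1, e2, e3, e4, e6, hp]

lemma Bexp_le : ∀ j, Bexp p j + p ^ j ≤ p ^ (2*j) := by
  intro j
  induction j with
  | zero => simp [Bexp]
  | succ j ih =>
    rw [Bexp, Finset.sum_range_succ, ← Bexp]
    obtain ⟨e1, e2, e3, e4, e5, e6⟩ := pow_facts p hp j
    have hsub : p^(2*j+2) - p^(2*j+1) + p^(2*j+1) = p^(2*j+2) :=
      Nat.sub_add_cancel (Nat.pow_le_pow_right (by omega) (by omega))
    nlinarith [ih, hsub, e1, e2, e3, e4, e5, e6, hp]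

end ineq

section charp
set_option linter.unusedSectionVars false
variable (p : ℕ) [Fact p.Prime] (F : Type*) [CommRing F] [IsDomain F] [CharP F p]

instance : CharP (PowerSeries F) p := charP_of_injective_ringHom (C_injective (R := F)) p

lemma omega_char (m : ℕ) : omegaPS p F m = X ^ (p ^ m) := by
  rw [omegaPS, add_pow_char_pow, one_pow, add_sub_cancel_left]

lemma phi_char {m : ℕ} (hm : 1 ≤ m) : PhiPS p F m = X ^ (p ^ m - p ^ (m - 1)) := by
  have h0 : PhiPS p F m = ∑ i ∈ Finset.range p, ((1+X : PowerSeries F)^(p^(m-1)))^i :=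
    Finset.sum_congr rfl fun i _ => by rw [← pow_mul, mul_comm]
  have h1 : PhiPS p F m * ((1 + X : PowerSeries F) ^ (p ^ (m-1)) - 1)
      = ((1+X : PowerSeries F) ^ (p^(m-1)))^p - 1 := by
    rw [h0]; exact geom_sum_mul _ p
  have h2 : ((1 + X : PowerSeries F) ^ (p ^ (m-1)) - 1) = X ^ (p ^ (m-1)) := by
    rw [add_pow_char_pow, one_pow, add_sub_cancel_left]
  have h3 : ((1+X : PowerSeries F) ^ (p^(m-1)))^p = (1+X)^(p^m) := by
    rw [← pow_mul]
    congr 1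
    rw [← pow_succ]
    congr 1
    omega
  have h4 : PhiPS p F m * X ^ (p ^ (m-1)) = X ^ (p ^ m) := by
    rw [← h2, h1, h3, add_pow_char_pow, one_pow, add_sub_cancel_left]
  have h5 : (X : PowerSeries F) ^ (p^m) = X ^ (p^m - p^(m-1)) * X ^ (p^(m-1)) := by
    rw [← pow_add]
    congr 1
    have : p ^ (m-1) ≤ p ^ m := Nat.pow_le_pow_right (Fact.out (p := p.Prime)).pos (Nat.sub_le m 1)
    omega
  have hX : (X : PowerSeries F) ^ (p ^ (m-1)) ≠ 0 := pow_ne_zero _ X_ne_zero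
  exact mul_right_cancel₀ hX (by rw [h4, h5])

lemma Hmat_char (j : ℕ) : Hmat p F 0 (2*j)
    = !![(-1 : PowerSeries F)^j * X^(Aexp p j), 0; 0, (-1)^j * X^(Bexp p j)] := by
  induction j with
  | zero => simp [Hmat, Aexp, Bexp, Matrix.one_fin_two]
  | succ j ih =>
    have e : 2*(j+1) = (2*j+1)+1 := by omega
    rw [e]
    rw [Hmat, Hmat, ih]
    have hC1 : Cmat p F 0 (2*j+1) = !![0, 1; -(X^(p^(2*j+1) - p^(2*j))), 0] := by
      rw [Cmat, phi_char p F (by omega : 1 ≤ 2*j+1)]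
      simp
    have hC2 : Cmat p F 0 ((2*j+1)+1) = !![0, 1; -(X^(p^(2*j+2) - p^(2*j+1))), 0] := by
      rw [Cmat, phi_char p F (by omega : 1 ≤ (2*j+1)+1)]
      simp
    rw [hC1, hC2, Matrix.mul_fin_two, Matrix.mul_fin_two]
    have hA : Aexp p (j+1) = Aexp p j + (p^(2*j+1) - p^(2*j)) := by
      rw [Aexp, Finset.sum_range_succ]; rfl
    have hB : Bexp p (j+1) = Bexp p j + (p^(2*j+2) - p^(2*j+1)) := by
      rw [Bexp, Finset.sum_range_succ]; rfl
    rw [hA, hB, pow_add, pow_add, pow_succ]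
    refine Matrix.ext fun i k => ?_
    fin_cases i <;> fin_cases k <;> simp <;> ring

lemma base_vanish (v0 v1 : PowerSeries F)
    (h : ∀ m, 1 ≤ m → ∀ i : Fin 2, omegaPS p F m ∣ (Hmat p F 0 m).mulVec ![v0, v1] i) :
    v0 = 0 ∧ v1 = 0 := by
  have hp2 : 2 ≤ p := (Fact.out (p := p.Prime)).two_le
  have key : ∀ N : ℕ, 1 ≤ N → (X:PowerSeries F)^(p^N) ∣ v0 ∧ (X:PowerSeries F)^(p^N) ∣ v1 := by
    intro N hN
    have h0 := h (2*N) (by omega) 0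
    have h1 := h (2*N) (by omega) 1
    rw [omega_char, Hmat_char] at h0 h1
    have e0 : (!![(-1 : PowerSeries F)^N * X^(Aexp p N), 0; 0, (-1)^N * X^(Bexp p N)]).mulVec
        ![v0, v1] 0 = (-1)^N * (X^(Aexp p N) * v0) := by
      simp [Matrix.mulVec, dotProduct, Fin.sum_univ_two, mul_assoc]
    have e1 : (!![(-1 : PowerSeries F)^N * X^(Aexp p N), 0; 0, (-1)^N * X^(Bexp p N)]).mulVec
        ![v0, v1] 1 = (-1)^N * (X^(Bexp p N) * v1) := by
      simp [Matrix.mulVec, dotProduct, Fin.sum_univ_two, mul_assoc]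
    rw [e0] at h0; rw [e1] at h1
    have cancel : ∀ (E : ℕ) (v : PowerSeries F), E + p^N ≤ p^(2*N) →
        (X:PowerSeries F)^(p^(2*N)) ∣ (-1)^N * (X^E * v) → (X:PowerSeries F)^(p^N) ∣ v := by
      intro E v hE hdvd
      have h2 : (X:PowerSeries F)^(p^(2*N)) ∣ X^E * v := by
        have h5 := hdvd.mul_left ((-1 : PowerSeries F)^N)
        rwa [← mul_assoc, ← pow_add, ← two_mul, Even.neg_one_pow ⟨N, two_mul N⟩, one_mul] at h5
      have h3 : (X:PowerSeries F)^E * X^(p^N) ∣ X^E * v := by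
        rw [← pow_add]
        exact dvd_trans (pow_dvd_pow _ hE) h2
      exact (mul_dvd_mul_iff_left (pow_ne_zero E (X_ne_zero (R := F)))).mp h3
    exact ⟨cancel _ _ (Aexp_le p hp2 N) h0, cancel _ _ (Bexp_le p hp2 N) h1⟩
  constructor <;>
  · ext n
    have hd := key (n+1) (by omega)
    have hlt : n < p ^ (n+1) := lt_trans (Nat.lt_succ_self n)
      (Nat.lt_pow_self (n := n+1) (by omega : 1 < p))
    simp only [map_zero]
    first
      | exact (X_pow_dvd_iff.mp hd.1) n hlt
      | exact (X_pow_dvd_iff.mp hd.2) n hlt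
end charp

section transport
variable {R S : Type*} [CommRing R] [CommRing S] (f : R →+* S)

lemma map_omegaPS (p m : ℕ) : PowerSeries.map f (omegaPS p R m) = omegaPS p S m := by
  simp [omegaPS]

lemma map_PhiPS (p m : ℕ) : PowerSeries.map f (PhiPS p R m) = PhiPS p S m := by
  simp [PhiPS]

lemma map_Cmat (p : ℕ) (a : R) (j : ℕ) :
    (Cmat p R a j).map (PowerSeries.map f) = Cmat p S (f a) j := by
  refine Matrix.ext fun i k => ?_
  fin_cases i <;> fin_cases k <;> simp [Cmat, map_PhiPS]

lemma map_Hmat (p : ℕ) (a : R) (m : ℕ) :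
    (Hmat p R a m).map (PowerSeries.map f) = Hmat p S (f a) m := by
  induction m with
  | zero =>
    refine Matrix.ext fun i k => ?_
    fin_cases i <;> fin_cases k <;> simp [Hmat, Matrix.one_fin_two]
  | succ m ih => rw [Hmat, Hmat, Matrix.map_mul, ih, map_Cmat]

lemma map_mulVec (M : Matrix (Fin 2) (Fin 2) (PowerSeries R)) (x y : PowerSeries R) (i : Fin 2) :
    PowerSeries.map f (M.mulVec ![x, y] i)
      = (M.map (PowerSeries.map f)).mulVec ![PowerSeries.map f x, PowerSeries.map f y] i := by
  fin_cases i <;>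
    simp [Matrix.mulVec, dotProduct, Fin.sum_univ_two, Matrix.map_apply]

lemma mulVec_smul (M : Matrix (Fin 2) (Fin 2) (PowerSeries R)) (c x y : PowerSeries R) (i : Fin 2) :
    M.mulVec ![c * x, c * y] i = c * M.mulVec ![x, y] i := by
  fin_cases i <;>
    simp [Matrix.mulVec, dotProduct, Fin.sum_univ_two] <;> ring

end transport

section lift
variable {R : Type*} [CommRing R]

lemma lift_of_map_zero (c : R) (F : PowerSeries R)
    (hF : PowerSeries.map (Ideal.Quotient.mk (Ideal.span {c})) F = 0) :
    ∃ G, F = PowerSeries.C c * G := by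
  have h : ∀ n, ∃ r, PowerSeries.coeff n F = c * r := by
    intro n
    have := congrArg (PowerSeries.coeff n) hF
    rw [PowerSeries.coeff_map, map_zero, Ideal.Quotient.eq_zero_iff_mem,
      Ideal.mem_span_singleton] at this
    exact this
  refine ⟨PowerSeries.mk fun n => (h n).choose, ?_⟩
  ext n
  rw [PowerSeries.coeff_C_mul, PowerSeries.coeff_mk]
  exact (h n).choose_spec

end lift

section devissage
variable (p : ℕ) [Fact p.Prime] {𝕆 : Type*} [CommRing 𝕆] [IsDomain 𝕆] [IsDiscreteValuationRing 𝕆]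
  {ϖ : 𝕆} (hϖ : Irreducible ϖ) (hpϖ : ϖ ∣ (p : 𝕆))
include hϖ hpϖ

lemma pi_cancel (m : ℕ) (f : PowerSeries 𝕆)
    (h : omegaPS p 𝕆 m ∣ PowerSeries.C ϖ * f) : omegaPS p 𝕆 m ∣ f := by
  haveI hmax : (Ideal.span {ϖ}).IsMaximal := PrincipalIdealRing.isMaximal_of_irreducible hϖ
  haveI : (Ideal.span {ϖ}).IsPrime := hmax.isPrime
  haveI : CharP (𝕆 ⧸ Ideal.span {ϖ}) p := by
    rw [CharP.charP_iff_prime_eq_zero (Fact.out (p := p.Prime))]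
    rw [← map_natCast (Ideal.Quotient.mk (Ideal.span {ϖ})) p]
    rw [Ideal.Quotient.eq_zero_iff_mem, Ideal.mem_span_singleton]
    exact hpϖ
  obtain ⟨g, hg⟩ := h
  have hφ := congrArg (PowerSeries.map (Ideal.Quotient.mk (Ideal.span {ϖ}))) hg
  rw [map_mul, map_mul, map_omegaPS, PowerSeries.map_C,
    show Ideal.Quotient.mk (Ideal.span {ϖ}) ϖ = 0 by
      rw [Ideal.Quotient.eq_zero_iff_mem, Ideal.mem_span_singleton],
    map_zero, zero_mul, omega_char] at hφ
  have hg0 : PowerSeries.map (Ideal.Quotient.mk (Ideal.span {ϖ})) g = 0 := by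
    rcases mul_eq_zero.mp hφ.symm with h' | h'
    · exact absurd h' (pow_ne_zero _ PowerSeries.X_ne_zero)
    · exact h'
  obtain ⟨g₁, rfl⟩ := lift_of_map_zero ϖ g hg0
  refine ⟨g₁, ?_⟩
  have hCϖ : (PowerSeries.C ϖ) ≠ 0 := fun hc => hϖ.ne_zero (C_injective (by simpa using hc))
  apply mul_left_cancel₀ hCϖ
  rw [hg]; ring

lemma pi_pow_cancel (k m : ℕ) (f : PowerSeries 𝕆)
    (h : omegaPS p 𝕆 m ∣ (PowerSeries.C ϖ)^k * f) : omegaPS p 𝕆 m ∣ f := by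
  induction k generalizing f with
  | zero => simpa using h
  | succ k ih =>
    have h' : omegaPS p 𝕆 m ∣ (PowerSeries.C ϖ)^k * (PowerSeries.C ϖ * f) := by
      rw [show (PowerSeries.C ϖ)^k * (PowerSeries.C ϖ * f)
        = (PowerSeries.C ϖ)^(k+1) * f by ring]
      exact h
    exact pi_cancel p hϖ hpϖ m f (ih _ h')

lemma devissage (a : 𝕆) (ha : ϖ ∣ a) (x y : PowerSeries 𝕆) (k : ℕ)
    (hyp : ∀ m, 1 ≤ m → ∀ i : Fin 2, ∃ g h,
      (Hmat p 𝕆 a m).mulVec ![x, y] i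
        = omegaPS p 𝕆 m * g + (PowerSeries.C ϖ)^k * h) :
    ∃ x' y', x = (PowerSeries.C ϖ)^k * x' ∧ y = (PowerSeries.C ϖ)^k * y' := by
  haveI hmax : (Ideal.span {ϖ}).IsMaximal := PrincipalIdealRing.isMaximal_of_irreducible hϖ
  haveI : (Ideal.span {ϖ}).IsPrime := hmax.isPrime
  haveI : CharP (𝕆 ⧸ Ideal.span {ϖ}) p := by
    rw [CharP.charP_iff_prime_eq_zero (Fact.out (p := p.Prime))]
    rw [← map_natCast (Ideal.Quotient.mk (Ideal.span {ϖ})) p]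
    rw [Ideal.Quotient.eq_zero_iff_mem, Ideal.mem_span_singleton]
    exact hpϖ
  induction k generalizing x y with
  | zero => exact ⟨x, y, by simp⟩
  | succ k ih =>
    obtain ⟨x', y', rfl, rfl⟩ := ih x y (fun m hm i => by
      obtain ⟨g, h, hgh⟩ := hyp m hm i
      exact ⟨g, PowerSeries.C ϖ * h, by rw [hgh]; ring⟩)
    -- now show x', y' are divisible by C ϖ
    have hW : ∀ m, 1 ≤ m → ∀ i : Fin 2, ∃ g h,
        (Hmat p 𝕆 a m).mulVec ![x', y'] i
          = omegaPS p 𝕆 m * g + PowerSeries.C ϖ * h := by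
      intro m hm i
      obtain ⟨g, h, hgh⟩ := hyp m hm i
      rw [mulVec_smul] at hgh
      have hd : omegaPS p 𝕆 m ∣ (PowerSeries.C ϖ)^k *
          ((Hmat p 𝕆 a m).mulVec ![x', y'] i - PowerSeries.C ϖ * h) := by
        refine ⟨g, ?_⟩
        rw [mul_sub, hgh]
        ring
      obtain ⟨g', hg'⟩ := pi_pow_cancel p hϖ hpϖ k m _ hd
      exact ⟨g', h, by rw [← hg']; ring⟩
    -- reduce mod ϖ and apply base_vanish
    set φ := PowerSeries.map (Ideal.Quotient.mk (Ideal.span {ϖ})) with hφdef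
    have hmka : Ideal.Quotient.mk (Ideal.span {ϖ}) a = 0 := by
      rw [Ideal.Quotient.eq_zero_iff_mem, Ideal.mem_span_singleton]; exact ha
    have hbase : φ x' = 0 ∧ φ y' = 0 := by
      apply base_vanish p (𝕆 ⧸ Ideal.span {ϖ})
      intro m hm i
      obtain ⟨g, h, hgh⟩ := hW m hm i
      refine ⟨φ g, ?_⟩
      have := congrArg φ hgh
      rw [map_mulVec, map_Hmat, hmka, map_add, map_mul, map_mul, map_omegaPS,
        PowerSeries.map_C,
        show Ideal.Quotient.mk (Ideal.span {ϖ}) ϖ = 0 by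
          rw [Ideal.Quotient.eq_zero_iff_mem, Ideal.mem_span_singleton],
        map_zero, zero_mul, add_zero] at this
      exact this
    obtain ⟨x'', hx''⟩ := lift_of_map_zero ϖ x' hbase.1
    obtain ⟨y'', hy''⟩ := lift_of_map_zero ϖ y' hbase.2
    exact ⟨x'', y'', by rw [hx'']; ring, by rw [hy'']; ring⟩

end devissage

lemma PS_map_surjective {R S : Type*} [CommRing R] [CommRing S] (f : R →+* S)
    (hf : Function.Surjective f) : Function.Surjective (PowerSeries.map f) := by
  intro g
  refine ⟨PowerSeries.mk fun n => Function.surjInv hf (PowerSeries.coeff n g), ?_⟩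
  ext n
  simp [PowerSeries.coeff_map, Function.surjInv_eq hf]


/-- if `ϖ ∣ a` and `x, y ∈ Λ` satisfy
`H_m·(x,y)ᵀ ≡ (0,0)ᵀ (mod ω_m·Λ)` for every `m ≥ 1`, then `x = y = 0`; and the
same holds with `Λ` replaced by `(𝕆/ϖⁿ𝕆)⟦X⟧` for any `n ≥ 1`, with `a, Φ_j, ω_m`
replaced by their images. -/
theorem sharp_flat_uniqueness_kernels
    (p : ℕ) (hp : p.Prime) (hp5 : 5 ≤ p)
    (𝕆 : Type*) [CommRing 𝕆] [IsDomain 𝕆] [IsDiscreteValuationRing 𝕆] [CharZero 𝕆]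
    (ϖ : 𝕆) (hϖ : Irreducible ϖ) (hpϖ : ϖ ∣ (p : 𝕆)) :
    (∀ a : 𝕆, ϖ ∣ a → ∀ x y : PowerSeries 𝕆,
      (∀ m : ℕ, 1 ≤ m → ∀ i : Fin 2,
        omegaPS p 𝕆 m ∣ (Hmat p 𝕆 a m).mulVec ![x, y] i) →
      x = 0 ∧ y = 0) ∧
    (∀ n : ℕ, 1 ≤ n → ∀ a : 𝕆, ϖ ∣ a →
      ∀ x y : PowerSeries (𝕆 ⧸ Ideal.span {ϖ ^ n}),
      (∀ m : ℕ, 1 ≤ m → ∀ i : Fin 2,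
        omegaPS p (𝕆 ⧸ Ideal.span {ϖ ^ n}) m ∣
          (Hmat p (𝕆 ⧸ Ideal.span {ϖ ^ n})
            (Ideal.Quotient.mk (Ideal.span {ϖ ^ n}) a) m).mulVec ![x, y] i) →
      x = 0 ∧ y = 0) := by
  haveI := Fact.mk hp
  have hzero : ∀ F : PowerSeries 𝕆,
      (∀ k : ℕ, ∃ F', F = (PowerSeries.C ϖ)^k * F') → F = 0 := by
    intro F hF
    ext n
    simp only [map_zero]
    by_contra hne
    obtain ⟨t, u, hu⟩ := IsDiscreteValuationRing.eq_unit_mul_pow_irreducible hne hϖ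
    obtain ⟨F', hF'⟩ := hF (t+1)
    have hdvd : ϖ^(t+1) ∣ PowerSeries.coeff n F := by
      refine ⟨PowerSeries.coeff n F', ?_⟩
      rw [hF', ← map_pow, PowerSeries.coeff_C_mul]
    rw [hu] at hdvd
    obtain ⟨w, hw⟩ := hdvd
    have hϖu : ϖ ∣ (u : 𝕆) := by
      refine (mul_dvd_mul_iff_left (pow_ne_zero t hϖ.ne_zero)).mp ⟨w, ?_⟩
      rw [show ϖ^t * ϖ * w = ϖ^(t+1)*w by ring, ← hw]
      ring
    exact hϖ.not_isUnit (isUnit_of_dvd_unit hϖu u.isUnit)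
  constructor
  · intro a ha x y hxy
    have key : ∀ k : ℕ, ∃ x' y', x = (PowerSeries.C ϖ)^k * x'
        ∧ y = (PowerSeries.C ϖ)^k * y' := by
      intro k
      refine devissage p hϖ hpϖ a ha x y k (fun m hm i => ?_)
      obtain ⟨g, hg⟩ := hxy m hm i
      exact ⟨g, 0, by rw [hg]; ring⟩
    constructor
    · refine hzero x fun k => ?_
      obtain ⟨x', y', hx, hy⟩ := key k
      exact ⟨x', hx⟩
    · refine hzero y fun k => ?_
      obtain ⟨x', y', hx, hy⟩ := key k
      exact ⟨y', hy⟩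
  · intro n hn a ha x y hxy
    set χ := Ideal.Quotient.mk (Ideal.span {ϖ^n}) with hχ
    have hsurj := PS_map_surjective χ Ideal.Quotient.mk_surjective
    obtain ⟨X0, hX0⟩ := hsurj x
    obtain ⟨Y0, hY0⟩ := hsurj y
    have hyp : ∀ m, 1 ≤ m → ∀ i : Fin 2, ∃ g h,
        (Hmat p 𝕆 a m).mulVec ![X0, Y0] i
          = omegaPS p 𝕆 m * g + (PowerSeries.C ϖ)^n * h := by
      intro m hm i
      obtain ⟨gb, hgb⟩ := hxy m hm i
      obtain ⟨g, hg⟩ := hsurj gb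
      have h0 : PowerSeries.map χ
          ((Hmat p 𝕆 a m).mulVec ![X0, Y0] i - omegaPS p 𝕆 m * g) = 0 := by
        rw [map_sub, map_mulVec, map_Hmat, hX0, hY0, map_mul, map_omegaPS, hg,
          sub_eq_zero]
        exact hgb
      obtain ⟨h, hh⟩ := lift_of_map_zero (ϖ^n) _ h0
      refine ⟨g, h, ?_⟩
      calc (Hmat p 𝕆 a m).mulVec ![X0, Y0] i
          = ((Hmat p 𝕆 a m).mulVec ![X0, Y0] i - omegaPS p 𝕆 m * g)
            + omegaPS p 𝕆 m * g := by ring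
        _ = omegaPS p 𝕆 m * g + (PowerSeries.C ϖ)^n * h := by
            rw [hh, ← map_pow]; ring
    obtain ⟨x', y', hx', hy'⟩ := devissage p hϖ hpϖ a ha X0 Y0 n hyp
    have hχ0 : χ (ϖ^n) = 0 := by
      rw [hχ, Ideal.Quotient.eq_zero_iff_mem]
      exact Ideal.subset_span rfl
    have hCn : PowerSeries.map χ ((PowerSeries.C ϖ)^n) = 0 := by
      rw [← map_pow, PowerSeries.map_C, hχ0, map_zero]
    constructor
    · rw [← hX0, hx', map_mul, hCn, zero_mul]
    · rw [← hY0, hy', map_mul, hCn, zero_mul]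
end

section
/- (Theorem 3.3 of the paper, case R = Λ/(ϖ^n).) Let n ≥ 1, let ā be the image in O_L/ϖ^n O_L of an element a ∈ O_L with ϖ ∣ a, and let (F_m)_{m≥0} be a sequence in R_n satisfying F_{m+1} ≡ ā·F_m − Φ̄_m·F_{m−1} (mod ω̄_m·R_n) for every m ≥ 1. Then there exists a unique pair (F^♯, F^♭) ∈ R_n × R_n such that for every m ≥ 1, H̄_m·(F^♯, F^♭)ᵀ ≡ (F_m, −Φ̄_m·F_{m−1})ᵀ (mod ω̄_m·R_n). -/
open PowerSeries

/-- A sequence `(F_m)_{m≥0}` in `Λ` is norm-compatible for `a` if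
`F_{m+1} ≡ a·F_m − Φ_m·F_{m−1} (mod ω_m·Λ)` for every `m ≥ 1`. -/
def NormCompat (p : ℕ) (R : Type*) [CommRing R] (a : R) (F : ℕ → PowerSeries R) : Prop :=
  ∀ m : ℕ, 1 ≤ m →
    omegaPS p R m ∣ (F (m + 1) - (PowerSeries.C (R := R) a * F m - PhiPS p R m * F (m - 1)))

namespace SFD

variable (p : ℕ) (A : Type*) [CommRing A] (a : A)

noncomputable def dPS (m : ℕ) : PowerSeries A := ∏ j ∈ Finset.range m, PhiPS p A (j + 1)

lemma omega_zero : omegaPS p A 0 = X := by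
  simp [omegaPS]

lemma omega_succ (m : ℕ) :
    omegaPS p A (m + 1) = PhiPS p A (m + 1) * omegaPS p A m := by
  have h := geom_sum_mul ((1 + X : PowerSeries A) ^ (p ^ m)) p
  unfold omegaPS PhiPS
  calc (1 + X : PowerSeries A) ^ p ^ (m+1) - 1
      = ((1 + X) ^ p ^ m) ^ p - 1 := by rw [← pow_mul, pow_succ]
    _ = (∑ i ∈ Finset.range p, ((1 + X : PowerSeries A) ^ p ^ m) ^ i) *
          ((1 + X) ^ p ^ m - 1) := h.symm
    _ = _ := by
        congr 1
        · refine Finset.sum_congr rfl fun i _ => ?_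
          rw [← pow_mul, Nat.add_sub_cancel, mul_comm (p ^ m) i]

lemma dPS_zero : dPS p A 0 = 1 := by simp [dPS]

lemma dPS_succ (m : ℕ) : dPS p A (m + 1) = dPS p A m * PhiPS p A (m + 1) := by
  simp [dPS, Finset.prod_range_succ]

lemma omega_eq (m : ℕ) : omegaPS p A m = X * dPS p A m := by
  induction m with
  | zero => simp [omega_zero, dPS_zero]
  | succ m ih => rw [omega_succ, ih, dPS_succ]; ring

lemma H_top (m : ℕ) (j : Fin 2) :
    Hmat p A a (m + 1) 0 j = C (R := A) a * Hmat p A a m 0 j + Hmat p A a m 1 j := by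
  show (Cmat p A a (m + 1) * Hmat p A a m) 0 j = _
  rw [Matrix.mul_apply, Fin.sum_univ_two]
  simp [Cmat]

lemma H_bot (m : ℕ) (j : Fin 2) :
    Hmat p A a (m + 1) 1 j = -(PhiPS p A (m + 1)) * Hmat p A a m 0 j := by
  show (Cmat p A a (m + 1) * Hmat p A a m) 1 j = _
  rw [Matrix.mul_apply, Fin.sum_univ_two]
  simp [Cmat]

lemma H000 : Hmat p A a 0 0 0 = 1 := by
  show (1 : Matrix (Fin 2) (Fin 2) (PowerSeries A)) 0 0 = 1; simp

lemma H001 : Hmat p A a 0 0 1 = 0 := by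
  show (1 : Matrix (Fin 2) (Fin 2) (PowerSeries A)) 0 1 = 0; simp

lemma H010 : Hmat p A a 0 1 0 = 0 := by
  show (1 : Matrix (Fin 2) (Fin 2) (PowerSeries A)) 1 0 = 0; simp

lemma H011 : Hmat p A a 0 1 1 = 1 := by
  show (1 : Matrix (Fin 2) (Fin 2) (PowerSeries A)) 1 1 = 1; simp

lemma Hrec2 (m : ℕ) (j : Fin 2) :
    Hmat p A a (m + 2) 0 j
      = C (R := A) a * Hmat p A a (m + 1) 0 j - PhiPS p A (m + 1) * Hmat p A a m 0 j := by
  rw [H_top, H_bot]; ring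

lemma detH (m : ℕ) :
    Hmat p A a m 0 0 * Hmat p A a m 1 1 - Hmat p A a m 0 1 * Hmat p A a m 1 0
      = dPS p A m := by
  induction m with
  | zero => rw [H000, H001, H010, H011, dPS_zero]; ring
  | succ m ih =>
      rw [H_top, H_top, H_bot, H_bot, dPS_succ, ← ih]; ring

lemma crossQ (m k : ℕ) :
    dPS p A m ∣ Hmat p A a (m + k) 0 0 * Hmat p A a m 0 1
      - Hmat p A a (m + k) 0 1 * Hmat p A a m 0 0 := by
  induction k using Nat.twoStepInduction with
  | zero => exact ⟨0, by ring⟩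
  | one =>
      have h0 := H_top p A a m (0 : Fin 2)
      have h1 := H_top p A a m (1 : Fin 2)
      have hd := detH p A a m
      refine ⟨-1, ?_⟩
      rw [h0, h1, ← hd]; ring
  | more k ih1 ih2 =>
      obtain ⟨c1, hc1⟩ := ih1
      obtain ⟨c2, hc2⟩ := ih2
      refine ⟨C (R := A) a * c2 - PhiPS p A (m + k + 1) * c1, ?_⟩
      have h0 := Hrec2 p A a (m + k) (0 : Fin 2)
      have h1 := Hrec2 p A a (m + k) (1 : Fin 2)
      have e0 : m + (k + 2) = (m + k) + 2 := by ring
      have e1 : m + (k + 1) = (m + k) + 1 := by ring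
      rw [e0, h0, h1]
      rw [e1] at hc2
      linear_combination C (R := A) a * hc2 - PhiPS p A (m + k + 1) * hc1


section Construction

variable (F g : ℕ → PowerSeries A)

/-- `t1 j` is the first component of the exact solution at level `j+1`. -/
noncomputable def t1 (j : ℕ) : PowerSeries A :=
  F 0 + ∑ l ∈ Finset.range j, -(X * g l * Hmat p A a (l + 1) 0 1)

/-- `t2 j` is the second component of the exact solution at level `j+1`. -/
noncomputable def t2 (j : ℕ) : PowerSeries A :=
  (F 1 - C (R := A) a * F 0) + ∑ l ∈ Finset.range j, (X * g l * Hmat p A a (l + 1) 0 0)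

lemma t1_succ (j : ℕ) :
    t1 p A a F g (j + 1) = t1 p A a F g j - X * g j * Hmat p A a (j + 1) 0 1 := by
  unfold t1; rw [Finset.sum_range_succ]; ring

lemma t2_succ (j : ℕ) :
    t2 p A a F g (j + 1) = t2 p A a F g j + X * g j * Hmat p A a (j + 1) 0 0 := by
  unfold t2; rw [Finset.sum_range_succ]; ring

variable (hg : ∀ j : ℕ, F (j + 2) - (C (R := A) a * F (j + 1) - PhiPS p A (j + 1) * F j)
    = omegaPS p A (j + 1) * g j)

include hg in
lemma exact_sol (j : ℕ) :
    (Hmat p A a (j + 1) 0 0 * t1 p A a F g j + Hmat p A a (j + 1) 0 1 * t2 p A a F g j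
        = F (j + 1)) ∧
    (Hmat p A a (j + 1) 1 0 * t1 p A a F g j + Hmat p A a (j + 1) 1 1 * t2 p A a F g j
        = -(PhiPS p A (j + 1) * F j)) := by
  induction j with
  | zero =>
      constructor
      · rw [H_top, H_top, H000, H001, H010, H011]
        show (C (R := A) a * 1 + 0) * t1 p A a F g 0 + (C (R := A) a * 0 + 1) * t2 p A a F g 0 = F 1
        unfold t1 t2; simp
      · rw [H_bot, H_bot, H000, H001]
        unfold t1 t2; simp
  | succ j ih =>
      obtain ⟨ih1, ih2⟩ := ih
      have h00 := H_top p A a (j + 1) (0 : Fin 2)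
      have h01 := H_top p A a (j + 1) (1 : Fin 2)
      have h10 := H_bot p A a (j + 1) (0 : Fin 2)
      have h11 := H_bot p A a (j + 1) (1 : Fin 2)
      have hdet := detH p A a (j + 1)
      have homega := omega_eq p A (j + 1)
      have hdsucc := dPS_succ p A j
      have hrel := hg j
      have ht1 := t1_succ p A a F g j
      have ht2 := t2_succ p A a F g j
      constructor
      · rw [ht1, ht2, h00, h01]
        linear_combination (C (R := A) a) * ih1 + ih2 + (X * g j) * hdet
          - hrel - (g j) * homega
      · rw [ht1, ht2, h10, h11]
        linear_combination (-(PhiPS p A (j + 2))) * ih1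

include hg in
lemma cong_sol (m' j : ℕ) (h : m' ≤ j) :
    (omegaPS p A (m' + 1) ∣
      Hmat p A a (m' + 1) 0 0 * t1 p A a F g j + Hmat p A a (m' + 1) 0 1 * t2 p A a F g j
        - F (m' + 1)) ∧
    (omegaPS p A (m' + 1) ∣
      Hmat p A a (m' + 1) 1 0 * t1 p A a F g j + Hmat p A a (m' + 1) 1 1 * t2 p A a F g j
        + PhiPS p A (m' + 1) * F m') := by
  induction j, h using Nat.le_induction with
  | base =>
      obtain ⟨e1, e2⟩ := exact_sol p A a F g hg m'
      constructor
      · rw [e1]; simp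
      · rw [e2]; simp
  | succ j hj ih =>
      obtain ⟨ih1, ih2⟩ := ih
      have ht1 := t1_succ p A a F g j
      have ht2 := t2_succ p A a F g j
      have homega : omegaPS p A (m' + 1) = X * dPS p A (m' + 1) := omega_eq p A (m' + 1)
      have hdsucc : dPS p A (m' + 1) = dPS p A m' * PhiPS p A (m' + 1) := dPS_succ p A m'
      obtain ⟨k, hk⟩ : ∃ k, j + 1 = (m' + 1) + k := ⟨j - m', by omega⟩
      obtain ⟨k', hk'⟩ : ∃ k', j + 1 = m' + k' := ⟨j + 1 - m', by omega⟩
      constructor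
      · obtain ⟨c, hc⟩ := hk ▸ crossQ p A a (m' + 1) k
        have key : Hmat p A a (m' + 1) 0 0 * t1 p A a F g (j + 1)
              + Hmat p A a (m' + 1) 0 1 * t2 p A a F g (j + 1) - F (m' + 1)
            = (Hmat p A a (m' + 1) 0 0 * t1 p A a F g j
              + Hmat p A a (m' + 1) 0 1 * t2 p A a F g j - F (m' + 1))
              + omegaPS p A (m' + 1) * (g j * c) := by
          rw [ht1, ht2, homega]
          linear_combination (X * g j) * hc
        rw [key]
        exact dvd_add ih1 (Dvd.intro _ rfl)
      · obtain ⟨c, hc⟩ := hk' ▸ crossQ p A a m' k'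
        have h10 := H_bot p A a m' (0 : Fin 2)
        have h11 := H_bot p A a m' (1 : Fin 2)
        have key : Hmat p A a (m' + 1) 1 0 * t1 p A a F g (j + 1)
              + Hmat p A a (m' + 1) 1 1 * t2 p A a F g (j + 1) + PhiPS p A (m' + 1) * F m'
            = (Hmat p A a (m' + 1) 1 0 * t1 p A a F g j
              + Hmat p A a (m' + 1) 1 1 * t2 p A a F g j + PhiPS p A (m' + 1) * F m')
              + omegaPS p A (m' + 1) * (-(g j * c)) := by
          rw [ht1, ht2, homega, hdsucc, h10, h11]
          linear_combination (-(X * g j * PhiPS p A (m' + 1))) * hc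
        rw [key]
        exact dvd_add ih2 (Dvd.intro _ rfl)
end Construction

section Analytic

variable {K : Type*} [Field K] (φ : A →+* K) (π : A) (n : ℕ)

lemma eq_zero_of_forall_X_pow_dvd (f : PowerSeries A)
    (h : ∀ M : ℕ, (X : PowerSeries A) ^ M ∣ f) : f = 0 := by
  ext k
  have := (X_pow_dvd_iff).mp (h (k + 1)) k (by omega)
  simpa using this

lemma exists_of_map_eq_zero (hker : ∀ x : A, φ x = 0 → π ∣ x)
    (f : PowerSeries A) (h : PowerSeries.map φ f = 0) :
    ∃ h', f = C (R := A) π * h' := by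
  have hc : ∀ k, φ (coeff (R := A) k f) = 0 := by
    intro k
    have : coeff (R := K) k (PowerSeries.map φ f) = 0 := by rw [h]; simp
    rwa [coeff_map] at this
  refine ⟨PowerSeries.mk fun k => (hker _ (hc k)).choose, ?_⟩
  ext k
  rw [coeff_C_mul, coeff_mk]
  exact (hker _ (hc k)).choose_spec

lemma split_lemma (M : ℕ) (f : PowerSeries A)
    (h : ∀ k, k < M → π ∣ coeff (R := A) k f) :
    ∃ h₁ h₂, f = C (R := A) π * h₁ + X ^ M * h₂ := by
  refine ⟨PowerSeries.mk fun k => if hk : k < M then (h k hk).choose else 0,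
    PowerSeries.mk fun k => coeff (R := A) (M + k) f, ?_⟩
  ext k
  rw [map_add, coeff_C_mul, coeff_mk, coeff_X_pow_mul']
  by_cases hk : k < M
  · rw [dif_pos hk, if_neg (by omega)]
    simpa using (h k hk).choose_spec
  · rw [dif_neg hk, if_pos (by omega), coeff_mk, mul_zero, zero_add]
    have hMk : M + (k - M) = k := by omega
    rw [hMk]

lemma nzd_of_map_ne_zero (hn : 0 < n) (hπ : π ^ n = 0)
    (hker : ∀ x : A, φ x = 0 → π ∣ x)
    (hann : ∀ (i : ℕ) (x : A), i < n → π ^ i * x = 0 → φ x = 0)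
    (f : PowerSeries A) (hf : PowerSeries.map φ f ≠ 0) :
    ∀ g, f * g = 0 → g = 0 := by
  intro g hg
  have claim : ∀ i, i ≤ n → ∃ h, g = (C (R := A) π) ^ i * h := by
    intro i
    induction i with
    | zero => exact fun _ => ⟨g, by simp⟩
    | succ i ih =>
        intro hi
        obtain ⟨h, hh⟩ := ih (by omega)
        have key : (C (R := A) π) ^ i * (f * h) = 0 := by
          rw [← hg, hh]; ring
        have hcoeff : ∀ k, φ (coeff (R := A) k (f * h)) = 0 := by
          intro k
          refine hann i _ (by omega) ?_
          have := congrArg (coeff (R := A) k) key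
          rwa [← map_pow, coeff_C_mul, map_zero] at this
        have hmap : PowerSeries.map φ (f * h) = 0 := by
          ext k; rw [coeff_map, hcoeff]; simp
        rw [map_mul] at hmap
        have : PowerSeries.map φ h = 0 := by
          rcases mul_eq_zero.mp hmap with h' | h'
          · exact absurd h' hf
          · exact h'
        obtain ⟨h', hh'⟩ := exists_of_map_eq_zero A φ π hker h this
        exact ⟨h', by rw [hh, hh', pow_succ]; ring⟩
  obtain ⟨h, hh⟩ := claim n le_rfl
  rw [hh, ← map_pow, hπ, map_zero, zero_mul]

end Analytic

section CharTransfer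

variable {p : ℕ} {K : Type*} [Field K] [hp : Fact p.Prime] [CharP K p]

lemma charP_powerSeries : CharP (PowerSeries K) p :=
  charP_of_injective_ringHom (f := (C (R := K) : K →+* PowerSeries K))
    (fun x y h => by simpa using congrArg (constantCoeff (R := K)) h) p

lemma onePlusX_pow_pow (m : ℕ) :
    (1 + X : PowerSeries K) ^ p ^ m = 1 + X ^ p ^ m := by
  haveI := charP_powerSeries (p := p) (K := K)
  rw [add_pow_char_pow, one_pow]

end CharTransfer

section MapLemmas

variable {K : Type*} [Field K] (φ : A →+* K) {p : ℕ} [hp : Fact p.Prime] [CharP K p]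

lemma map_omega (m : ℕ) :
    PowerSeries.map φ (omegaPS p A m) = X ^ p ^ m := by
  unfold omegaPS
  rw [map_sub, map_pow, map_add, map_one, PowerSeries.map_X, onePlusX_pow_pow]
  ring

lemma map_phi (m : ℕ) :
    PowerSeries.map φ (PhiPS p A (m + 1)) = X ^ (p ^ (m + 1) - p ^ m) := by
  have h := congrArg (PowerSeries.map φ) (omega_succ p A m)
  rw [map_omega, map_mul, map_omega] at h
  have hle : p ^ m ≤ p ^ (m + 1) := Nat.pow_le_pow_right hp.out.pos (by omega)
  have h2 : (X : PowerSeries K) ^ p ^ (m + 1)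
      = X ^ (p ^ (m + 1) - p ^ m) * X ^ p ^ m := by
    rw [← pow_add]; congr 1; omega
  rw [h2] at h
  exact mul_right_cancel₀ (pow_ne_zero _ X_ne_zero) h.symm

lemma map_d_ne_zero (m : ℕ) : PowerSeries.map φ (dPS p A m) ≠ 0 := by
  unfold dPS
  rw [map_prod]
  refine Finset.prod_ne_zero_iff.mpr fun j _ => ?_
  rw [map_phi]
  exact pow_ne_zero _ X_ne_zero

lemma map_omega_ne_zero (m : ℕ) : PowerSeries.map φ (omegaPS p A m) ≠ 0 := by
  rw [map_omega]; exact pow_ne_zero _ X_ne_zero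

end MapLemmas


section Order

variable {K : Type*} [Field K] (φ : A →+* K) (π : A) (n : ℕ)
variable {p : ℕ} [hp : Fact p.Prime] [CharP K p]

lemma order_bound (hn : 0 < n) (hπ : π ^ n = 0)
    (hker : ∀ x : A, φ x = 0 → π ∣ x)
    (hann : ∀ (i : ℕ) (x : A), i < n → π ^ i * x = 0 → φ x = 0)
    (m N : ℕ) (hN : n * p ^ m ≤ N) (g q : PowerSeries A)
    (h : omegaPS p A m * g = X ^ N * q) :
    (X : PowerSeries A) ^ (N - n * p ^ m) ∣ g := by
  have claim : ∀ i, i ≤ n → ∃ u w, g = X ^ (N - i * p ^ m) * u + (C (R := A) π) ^ i * w := by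
    intro i
    induction i with
    | zero => exact fun _ => ⟨0, g, by simp⟩
    | succ i ih =>
        intro hi
        obtain ⟨u, w, hw⟩ := ih (by omega)
        have hip : i * p ^ m ≤ N := by
          calc i * p ^ m ≤ n * p ^ m := Nat.mul_le_mul_right _ (by omega)
            _ ≤ N := hN
        have hip1 : (i + 1) * p ^ m ≤ N := by
          calc (i + 1) * p ^ m ≤ n * p ^ m := Nat.mul_le_mul_right _ (by omega)
            _ ≤ N := hN
        have key : (C (R := A) π) ^ i * (omegaPS p A m * w)
            = X ^ (N - i * p ^ m) * (X ^ (i * p ^ m) * q - omegaPS p A m * u) := by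
          have hXN : (X : PowerSeries A) ^ N = X ^ (N - i * p ^ m) * X ^ (i * p ^ m) := by
            rw [← pow_add]; congr 1; omega
          rw [hw] at h
          linear_combination h + q * hXN
        -- coefficients of ω*w below N - i*p^m are killed by π^i
        have hcoeff : ∀ k, k < N - i * p ^ m → φ (coeff (R := A) k (omegaPS p A m * w)) = 0 := by
          intro k hk
          refine hann i _ (by omega) ?_
          have := congrArg (coeff (R := A) k) key
          rw [← map_pow, coeff_C_mul] at this
          rw [this]
          exact (X_pow_dvd_iff.mp (Dvd.intro _ rfl)) k hk
        have hmapdvd : (X : PowerSeries K) ^ (N - i * p ^ m)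
            ∣ PowerSeries.map φ (omegaPS p A m * w) := by
          rw [X_pow_dvd_iff]
          intro k hk
          rw [coeff_map, hcoeff k hk]
        rw [map_mul, map_omega] at hmapdvd
        obtain ⟨v, hv⟩ := hmapdvd
        have hsplit : (X : PowerSeries K) ^ (N - i * p ^ m)
            = X ^ p ^ m * X ^ (N - (i + 1) * p ^ m) := by
          rw [← pow_add]; congr 1
          have : (i + 1) * p ^ m = i * p ^ m + p ^ m := by ring
          omega
        have hw2 : PowerSeries.map φ w = X ^ (N - (i + 1) * p ^ m) * v := by
          refine mul_left_cancel₀ (pow_ne_zero (p ^ m) (X_ne_zero (R := K))) ?_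
          rw [hv, hsplit]; ring
        have hwd : ∀ k, k < N - (i + 1) * p ^ m → π ∣ coeff (R := A) k w := by
          intro k hk
          apply hker
          have : coeff (R := K) k (PowerSeries.map φ w) = 0 := by
            rw [hw2]
            exact (X_pow_dvd_iff.mp (Dvd.intro _ rfl)) k hk
          rwa [coeff_map] at this
        obtain ⟨w₁, w₂, hww⟩ := split_lemma A π (N - (i + 1) * p ^ m) w hwd
        refine ⟨X ^ p ^ m * u + (C (R := A) π) ^ i * w₂, w₁, ?_⟩
        have hX1 : (X : PowerSeries A) ^ (N - i * p ^ m)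
            = X ^ (N - (i + 1) * p ^ m) * X ^ p ^ m := by
          rw [← pow_add]; congr 1
          have : (i + 1) * p ^ m = i * p ^ m + p ^ m := by ring
          omega
        rw [hw, hww, hX1, pow_succ]
        ring
  obtain ⟨u, w, huw⟩ := claim n le_rfl
  rw [huw, ← map_pow, hπ, map_zero, zero_mul, add_zero]
  exact Dvd.intro _ rfl

lemma limit_exists (Δ : ℕ → PowerSeries A) (β : ℕ → ℕ)
    (hβ : ∀ k, ∃ J, ∀ j, J ≤ j → k < β j)
    (hΔ : ∀ j, (X : PowerSeries A) ^ (β j) ∣ Δ j) :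
    ∃ S : PowerSeries A, ∀ J M : ℕ, (∀ j, J ≤ j → M ≤ β j) →
      (X : PowerSeries A) ^ M ∣ S - ∑ j ∈ Finset.range J, Δ j := by
  have hcz : ∀ k j, k < β j → coeff (R := A) k (Δ j) = 0 := fun k j hk =>
    (X_pow_dvd_iff.mp (hΔ j)) k hk
  choose Jf hJf using hβ
  refine ⟨PowerSeries.mk fun k => ∑ j ∈ Finset.range (Jf k), coeff (R := A) k (Δ j), ?_⟩
  intro J M hJM
  rw [X_pow_dvd_iff]
  intro k hk
  rw [map_sub, coeff_mk, map_sum]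
  have h1 : ∑ j ∈ Finset.range (Jf k), coeff (R := A) k (Δ j)
      = ∑ j ∈ Finset.range (max (Jf k) J), coeff (R := A) k (Δ j) := by
    refine Finset.sum_subset (Finset.range_subset_range.mpr (le_max_left _ _)) ?_
    intro j hj hnj
    refine hcz k j (hJf k j ?_)
    simp only [Finset.mem_range, not_lt] at hnj
    omega
  have h2 : ∑ j ∈ Finset.range J, coeff (R := A) k (Δ j)
      = ∑ j ∈ Finset.range (max (Jf k) J), coeff (R := A) k (Δ j) := by
    refine Finset.sum_subset (Finset.range_subset_range.mpr (le_max_right _ _)) ?_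
    intro j hj hnj
    simp only [Finset.mem_range, not_lt] at hnj
    have : M ≤ β j := hJM j (by omega)
    exact hcz k j (by omega)
  rw [h1, h2, sub_self]

lemma omega_closed (hn : 0 < n) (hπ : π ^ n = 0)
    (hker : ∀ x : A, φ x = 0 → π ∣ x)
    (hann : ∀ (i : ℕ) (x : A), i < n → π ^ i * x = 0 → φ x = 0)
    (m : ℕ) (f : PowerSeries A)
    (h : ∀ M : ℕ, ∃ q r, f = omegaPS p A m * q + X ^ M * r) :
    omegaPS p A m ∣ f := by
  set P := n * p ^ m with hP
  choose q r hqr using fun j => h (P + j)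
  have hΔ : ∀ j, (X : PowerSeries A) ^ j ∣ (q (j + 1) - q j) := by
    intro j
    have key : omegaPS p A m * (q (j + 1) - q j)
        = X ^ (P + j) * (r j - X * r (j + 1)) := by
      have e1 := hqr j
      have e2 := hqr (j + 1)
      have hXs : (X : PowerSeries A) ^ (P + (j + 1)) = X ^ (P + j) * X := by
        rw [← pow_succ]; ring_nf
      rw [hXs] at e2
      linear_combination e1 - e2
    have := order_bound A φ π n hn hπ hker hann m (P + j) (by omega)
      (q (j + 1) - q j) (r j - X * r (j + 1)) key
    have hPP : P + j - n * p ^ m = j := by omega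
    rwa [hPP] at this
  obtain ⟨S, hS⟩ := limit_exists A (fun j => q (j + 1) - q j) (fun j => j)
    (fun k => ⟨k + 1, fun j hj => show k < j by omega⟩) hΔ
  refine ⟨q 0 + S, ?_⟩
  have hzero : f - omegaPS p A m * (q 0 + S) = 0 := by
    apply eq_zero_of_forall_X_pow_dvd
    intro M
    have htel : ∑ j ∈ Finset.range M, (q (j + 1) - q j) = q M - q 0 :=
      Finset.sum_range_sub q M
    have hSM := hS M M (fun j hj => show M ≤ j from hj)
    rw [htel] at hSM
    obtain ⟨c, hc⟩ := hSM
    have : f - omegaPS p A m * (q 0 + S)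
        = X ^ M * (X ^ P * r M) - omegaPS p A m * (X ^ M * c) := by
      have e := hqr M
      have hXs : (X : PowerSeries A) ^ (P + M) = X ^ M * X ^ P := by
        rw [← pow_add]; congr 1; omega
      rw [hXs] at e
      linear_combination e - omegaPS p A m * hc
    rw [this]
    exact dvd_sub (Dvd.intro _ rfl) ⟨omegaPS p A m * c, by ring⟩
  linear_combination hzero

end Order


section IdealBound

variable (π : A) (n : ℕ)

noncomputable def Ipi : Ideal (PowerSeries A) := Ideal.span {C (R := A) π, (X : PowerSeries A)}

lemma X_mem_Ipi : (X : PowerSeries A) ∈ Ipi A π :=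
  Ideal.subset_span (by simp)

lemma C_mem_Ipi (b : A) (hb : π ∣ b) : C (R := A) b ∈ Ipi A π := by
  obtain ⟨c, rfl⟩ := hb
  rw [map_mul]
  exact Ideal.mul_mem_right _ _ (Ideal.subset_span (by simp))

lemma constantCoeff_phi (p : ℕ) (m : ℕ) :
    constantCoeff (R := A) (PhiPS p A (m + 1)) = (p : A) := by
  unfold PhiPS
  rw [map_sum]
  have : ∀ i ∈ Finset.range p,
      constantCoeff (R := A) ((1 + X) ^ (i * p ^ (m + 1 - 1))) = 1 := by
    intro i _
    rw [map_pow, map_add, constantCoeff_one, constantCoeff_X, add_zero, one_pow]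
  rw [Finset.sum_congr rfl this]
  simp

lemma phi_mem_Ipi (p : ℕ) (hpA : π ∣ (p : A)) (m : ℕ) :
    PhiPS p A (m + 1) ∈ Ipi A π := by
  obtain ⟨qq, hq⟩ : (X : PowerSeries A) ∣ PhiPS p A (m + 1) - C (R := A) (p : A) := by
    rw [X_dvd_iff, map_sub, constantCoeff_phi, constantCoeff_C, sub_self]
  have hrepr : PhiPS p A (m + 1) = C (R := A) (p : A) + X * qq := by linear_combination hq
  rw [hrepr]
  exact add_mem (C_mem_Ipi A π _ hpA) (Ideal.mul_mem_right _ _ (X_mem_Ipi A π))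

lemma H_entry_mem (p : ℕ) (a : A) (hpA : π ∣ (p : A)) (ha : π ∣ a) :
    ∀ (m : ℕ) (j : Fin 2), Hmat p A a m 0 j ∈ (Ipi A π) ^ (m / 2) := by
  intro m
  induction m using Nat.twoStepInduction with
  | zero => intro j; simp [Ideal.one_eq_top]
  | one => intro j; simp [Ideal.one_eq_top]
  | more m ih1 ih2 =>
      intro j
      have hdiv : (m + 2) / 2 = m / 2 + 1 := by omega
      rw [hdiv, Hrec2]
      refine sub_mem ?_ ?_
      · have h1 : Hmat p A a (m + 1) 0 j ∈ (Ipi A π) ^ (m / 2) :=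
          Ideal.pow_le_pow_right (by omega) (ih2 j)
        rw [pow_succ']
        exact Ideal.mul_mem_mul (C_mem_Ipi A π a ha) h1
      · rw [pow_succ']
        exact Ideal.mul_mem_mul (phi_mem_Ipi A π p hpA m) (ih1 j)

lemma repr_pow (hn : 0 < n) (hπ : π ^ n = 0) :
    ∀ (k : ℕ) (f : PowerSeries A), f ∈ (Ipi A π) ^ k →
      ∃ c : ℕ → PowerSeries A,
        f = ∑ i ∈ Finset.range n, (C (R := A) π) ^ i * X ^ (k - i) * c i := by
  intro k
  induction k with
  | zero =>
      intro f _
      refine ⟨fun i => if i = 0 then f else 0, ?_⟩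
      rw [Finset.sum_eq_single 0]
      · simp
      · intro i _ hne; simp [hne]
      · intro h0; exact absurd (Finset.mem_range.mpr hn) h0
  | succ k ih =>
      intro f hf
      rw [pow_succ] at hf
      refine Submodule.mul_induction_on hf ?_ ?_
      · intro x hx y hy
        obtain ⟨c, hc⟩ := ih x hx
        obtain ⟨u, v, huv⟩ := Ideal.mem_span_pair.mp hy
        refine ⟨fun i => X ^ ((k - i) + 1 - (k + 1 - i)) * (v * c i)
          + (if i = 0 then 0 else u * c (i - 1)), ?_⟩
        obtain ⟨n', rfl⟩ : ∃ n', n = n' + 1 := ⟨n - 1, by omega⟩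
        have hsplit : ∑ i ∈ Finset.range (n' + 1), (C (R := A) π) ^ i * X ^ (k + 1 - i) *
              (X ^ ((k - i) + 1 - (k + 1 - i)) * (v * c i)
                + (if i = 0 then 0 else u * c (i - 1)))
            = (∑ i ∈ Finset.range (n' + 1),
                (C (R := A) π) ^ i * X ^ (k + 1 - i) * (X ^ ((k - i) + 1 - (k + 1 - i)) * (v * c i)))
              + (∑ i ∈ Finset.range (n' + 1),
                (C (R := A) π) ^ i * X ^ (k + 1 - i) * (if i = 0 then 0 else u * c (i - 1))) := by
          rw [← Finset.sum_add_distrib]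
          exact Finset.sum_congr rfl fun i _ => by ring
        have h1 : ∑ i ∈ Finset.range (n' + 1),
              (C (R := A) π) ^ i * X ^ (k + 1 - i) * (X ^ ((k - i) + 1 - (k + 1 - i)) * (v * c i))
            = ∑ i ∈ Finset.range (n' + 1),
              (C (R := A) π) ^ i * X ^ ((k - i) + 1) * (v * c i) := by
          refine Finset.sum_congr rfl fun i _ => ?_
          have hxp : (X : PowerSeries A) ^ (k + 1 - i) * X ^ ((k - i) + 1 - (k + 1 - i))
              = X ^ ((k - i) + 1) := by
            rw [← pow_add]; congr 1; omega
          linear_combination ((C (R := A) π) ^ i * (v * c i)) * hxp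
        have h2 : ∑ i ∈ Finset.range (n' + 1),
              (C (R := A) π) ^ i * X ^ (k + 1 - i) * (if i = 0 then 0 else u * c (i - 1))
            = C (R := A) π * u * x := by
          rw [Finset.sum_range_succ']
          have hstep : ∀ i ∈ Finset.range n',
              (C (R := A) π) ^ (i + 1) * X ^ (k + 1 - (i + 1)) *
                  (if i + 1 = 0 then 0 else u * c (i + 1 - 1))
                = C (R := A) π * u * ((C (R := A) π) ^ i * X ^ (k - i) * c i) := by
            intro i _
            have hk : k + 1 - (i + 1) = k - i := by omega
            rw [hk, if_neg (by omega), Nat.add_sub_cancel, pow_succ]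
            ring
          have hlast : C (R := A) π * u * ((C (R := A) π) ^ n' * X ^ (k - n') * c n') = 0 := by
            have hz : C (R := A) π * (C (R := A) π) ^ n' = 0 := by
              rw [← pow_succ', ← map_pow, hπ, map_zero]
            linear_combination (u * X ^ (k - n') * c n') * hz
          rw [Finset.sum_congr rfl hstep, hc, Finset.mul_sum, Finset.sum_range_succ, hlast,
            add_zero]
          simp
        have h3 : x * (v * X) = ∑ i ∈ Finset.range (n' + 1),
            (C (R := A) π) ^ i * X ^ ((k - i) + 1) * (v * c i) := by
          rw [hc, Finset.sum_mul]
          refine Finset.sum_congr rfl fun i _ => ?_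
          rw [pow_succ]
          ring
        calc x * y = C (R := A) π * u * x + x * (v * X) := by rw [← huv]; ring
          _ = C (R := A) π * u * x + ∑ i ∈ Finset.range (n' + 1),
                (C (R := A) π) ^ i * X ^ ((k - i) + 1) * (v * c i) := by rw [h3]
          _ = ∑ i ∈ Finset.range (n' + 1), (C (R := A) π) ^ i * X ^ (k + 1 - i) *
              (X ^ ((k - i) + 1 - (k + 1 - i)) * (v * c i)
                + (if i = 0 then 0 else u * c (i - 1))) := by
              rw [← h1, ← h2, add_comm]
              exact hsplit.symm
      · rintro x y ⟨c1, hc1⟩ ⟨c2, hc2⟩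
        refine ⟨fun i => c1 i + c2 i, ?_⟩
        rw [hc1, hc2, ← Finset.sum_add_distrib]
        exact Finset.sum_congr rfl fun i _ => by ring

lemma small_of_mem (hn : 0 < n) (hπ : π ^ n = 0) (k : ℕ) (f : PowerSeries A)
    (hf : f ∈ (Ipi A π) ^ k) : (X : PowerSeries A) ^ (k + 1 - n) ∣ f := by
  obtain ⟨c, hc⟩ := repr_pow A π n hn hπ k f hf
  rw [hc]
  refine Finset.dvd_sum fun i hi => ?_
  have hle : k + 1 - n ≤ k - i := by
    simp only [Finset.mem_range] at hi; omega
  exact dvd_mul_of_dvd_left (dvd_mul_of_dvd_right (pow_dvd_pow _ hle) _) _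

end IdealBound


section Main

variable {K : Type*} [Field K]

/-- The two congruences at level `m = m'+1`, for a candidate pair. -/
def Good (p : ℕ) (A : Type*) [CommRing A] (a : A) (F : ℕ → PowerSeries A)
    (w : PowerSeries A × PowerSeries A) : Prop :=
  ∀ m : ℕ, 1 ≤ m →
    (omegaPS p A m ∣
      Hmat p A a m 0 0 * w.1 + Hmat p A a m 0 1 * w.2 - F m) ∧
    (omegaPS p A m ∣
      Hmat p A a m 1 0 * w.1 + Hmat p A a m 1 1 * w.2 + PhiPS p A m * F (m - 1))

theorem uniq_aux {p n : ℕ} (hp : Fact p.Prime) [CharP K p]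
    (φ : A →+* K) (π a : A)
    (hn : 0 < n) (hπ : π ^ n = 0)
    (hker : ∀ x : A, φ x = 0 → π ∣ x)
    (hann : ∀ (i : ℕ) (x : A), i < n → π ^ i * x = 0 → φ x = 0)
    (ha : π ∣ a) (hpA : π ∣ (p : A))
    (F : ℕ → PowerSeries A) (x y : PowerSeries A × PowerSeries A)
    (hx : Good p A a F x) (hy : Good p A a F y) : x = y := by
  haveI := hp
  set δ1 := x.1 - y.1 with hδ1
  set δ2 := x.2 - y.2 with hδ2
  -- key smallness for every level
  have key : ∀ m' : ℕ, ((X : PowerSeries A) ^ (m' / 2 + 2 - n) ∣ δ1)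
      ∧ ((X : PowerSeries A) ^ (m' / 2 + 2 - n) ∣ δ2) := by
    intro m'
    obtain ⟨hx1, hx2⟩ := hx (m' + 1) (by omega)
    obtain ⟨hy1, hy2⟩ := hy (m' + 1) (by omega)
    obtain ⟨c1, hc1⟩ : omegaPS p A (m' + 1) ∣
        Hmat p A a (m' + 1) 0 0 * δ1 + Hmat p A a (m' + 1) 0 1 * δ2 := by
      have := dvd_sub hx1 hy1
      rw [hδ1, hδ2]
      convert this using 1
      ring
    obtain ⟨c2, hc2⟩ : omegaPS p A (m' + 1) ∣
        Hmat p A a (m' + 1) 1 0 * δ1 + Hmat p A a (m' + 1) 1 1 * δ2 := by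
      have := dvd_sub hx2 hy2
      rw [hδ1, hδ2]
      convert this using 1
      ring
    have hdet := detH p A a (m' + 1)
    have homega := omega_eq p A (m' + 1)
    have hnzd := nzd_of_map_ne_zero A φ π n hn hπ hker hann (dPS p A (m' + 1))
      (map_d_ne_zero A φ (m' + 1))
    have e1 : δ1 = X * (Hmat p A a (m' + 1) 1 1 * c1 - Hmat p A a (m' + 1) 0 1 * c2) := by
      have hzero : dPS p A (m' + 1) *
          (δ1 - X * (Hmat p A a (m' + 1) 1 1 * c1 - Hmat p A a (m' + 1) 0 1 * c2)) = 0 := by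
        linear_combination Hmat p A a (m' + 1) 1 1 * hc1 - Hmat p A a (m' + 1) 0 1 * hc2
          - δ1 * hdet + (Hmat p A a (m' + 1) 1 1 * c1 - Hmat p A a (m' + 1) 0 1 * c2) * homega
      have := hnzd _ hzero
      linear_combination this
    have e2 : δ2 = X * (Hmat p A a (m' + 1) 0 0 * c2 - Hmat p A a (m' + 1) 1 0 * c1) := by
      have hzero : dPS p A (m' + 1) *
          (δ2 - X * (Hmat p A a (m' + 1) 0 0 * c2 - Hmat p A a (m' + 1) 1 0 * c1)) = 0 := by
        linear_combination Hmat p A a (m' + 1) 0 0 * hc2 - Hmat p A a (m' + 1) 1 0 * hc1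
          - δ2 * hdet + (Hmat p A a (m' + 1) 0 0 * c2 - Hmat p A a (m' + 1) 1 0 * c1) * homega
      have := hnzd _ hzero
      linear_combination this
    have hmem : ∀ jj : Fin 2, Hmat p A a (m' + 1) 0 jj ∈ (Ipi A π) ^ (m' / 2) := by
      intro jj
      exact Ideal.pow_le_pow_right (show m' / 2 ≤ (m' + 1) / 2 by omega) (H_entry_mem A π p a hpA ha (m' + 1) jj)
    have hmem2 : ∀ jj : Fin 2, Hmat p A a (m' + 1) 1 jj ∈ (Ipi A π) ^ (m' / 2) := by
      intro jj
      rw [H_bot]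
      have h1 : PhiPS p A (m' + 1) * Hmat p A a m' 0 jj ∈ (Ipi A π) ^ (m' / 2 + 1) := by
        rw [pow_succ']
        exact Ideal.mul_mem_mul (phi_mem_Ipi A π p hpA m') (H_entry_mem A π p a hpA ha m' jj)
      rw [neg_mul]
      exact neg_mem (Ideal.pow_le_pow_right (show m' / 2 ≤ m' / 2 + 1 by omega) h1)
    have hsm1 : δ1 ∈ (Ipi A π) ^ (m' / 2 + 1) := by
      rw [e1, pow_succ']
      refine Ideal.mul_mem_mul (X_mem_Ipi A π) (sub_mem ?_ ?_)
      · exact Ideal.mul_mem_right _ _ (hmem2 1)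
      · exact Ideal.mul_mem_right _ _ (hmem 1)
    have hsm2 : δ2 ∈ (Ipi A π) ^ (m' / 2 + 1) := by
      rw [e2, pow_succ']
      refine Ideal.mul_mem_mul (X_mem_Ipi A π) (sub_mem ?_ ?_)
      · exact Ideal.mul_mem_right _ _ (hmem 0)
      · exact Ideal.mul_mem_right _ _ (hmem2 0)
    exact ⟨small_of_mem A π n hn hπ _ _ hsm1, small_of_mem A π n hn hπ _ _ hsm2⟩
  have hδ1z : δ1 = 0 := by
    apply eq_zero_of_forall_X_pow_dvd
    intro M
    refine dvd_trans (pow_dvd_pow _ ?_) ((key (2 * (M + n))).1)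
    have h2 : (2 * (M + n)) / 2 = M + n := by omega
    omega
  have hδ2z : δ2 = 0 := by
    apply eq_zero_of_forall_X_pow_dvd
    intro M
    refine dvd_trans (pow_dvd_pow _ ?_) ((key (2 * (M + n))).2)
    have h2 : (2 * (M + n)) / 2 = M + n := by omega
    omega
  have h1 : x.1 = y.1 := by
    rw [hδ1, sub_eq_zero] at hδ1z
    exact hδ1z
  have h2 : x.2 = y.2 := by
    rw [hδ2, sub_eq_zero] at hδ2z
    exact hδ2z
  exact Prod.ext h1 h2


theorem exists_good {p n : ℕ} (hp : Fact p.Prime) [CharP K p]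
    (φ : A →+* K) (π a : A)
    (hn : 0 < n) (hπ : π ^ n = 0)
    (hker : ∀ x : A, φ x = 0 → π ∣ x)
    (hann : ∀ (i : ℕ) (x : A), i < n → π ^ i * x = 0 → φ x = 0)
    (ha : π ∣ a) (hpA : π ∣ (p : A))
    (F : ℕ → PowerSeries A)
    (hF : ∀ m : ℕ, 1 ≤ m →
      omegaPS p A m ∣ (F (m + 1) - (C (R := A) a * F m - PhiPS p A m * F (m - 1)))) :
    ∃ w, Good p A a F w := by
  haveI := hp
  have hFe : ∀ j : ℕ, ∃ gj, F (j + 2) - (C (R := A) a * F (j + 1) - PhiPS p A (j + 1) * F j)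
      = omegaPS p A (j + 1) * gj := by
    intro j
    obtain ⟨gj, hgj⟩ := hF (j + 1) (by omega)
    exact ⟨gj, by simpa using hgj⟩
  choose g hg using hFe
  set β : ℕ → ℕ := fun l => (l + 1) / 2 + 2 - n with hβdef
  have hβ : ∀ k, ∃ J, ∀ j, J ≤ j → k < β j := by
    intro k
    refine ⟨2 * (k + n) + 2, fun j hj => ?_⟩
    have h2 : (j + 1) / 2 ≥ k + n + 1 := by omega
    simp only [hβdef]
    omega
  have hmemΔ : ∀ (l : ℕ) (jj : Fin 2),
      X * g l * Hmat p A a (l + 1) 0 jj ∈ (Ipi A π) ^ ((l + 1) / 2 + 1) := by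
    intro l jj
    rw [pow_succ', mul_assoc]
    exact Ideal.mul_mem_mul (X_mem_Ipi A π)
      (Ideal.mul_mem_left _ _ (H_entry_mem A π p a hpA ha (l + 1) jj))
  have hΔ1 : ∀ l, (X : PowerSeries A) ^ (β l) ∣ -(X * g l * Hmat p A a (l + 1) 0 1) := by
    intro l
    rw [dvd_neg]
    exact small_of_mem A π n hn hπ _ _ (hmemΔ l 1)
  have hΔ2 : ∀ l, (X : PowerSeries A) ^ (β l) ∣ (X * g l * Hmat p A a (l + 1) 0 0) :=
    fun l => small_of_mem A π n hn hπ _ _ (hmemΔ l 0)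
  obtain ⟨S1, hS1⟩ := limit_exists A (fun l => -(X * g l * Hmat p A a (l + 1) 0 1)) β hβ hΔ1
  obtain ⟨S2, hS2⟩ := limit_exists A (fun l => X * g l * Hmat p A a (l + 1) 0 0) β hβ hΔ2
  refine ⟨(F 0 + S1, (F 1 - C (R := A) a * F 0) + S2), ?_⟩
  intro m hm
  obtain ⟨m', rfl⟩ : ∃ m', m = m' + 1 := ⟨m - 1, by omega⟩
  simp only [Nat.add_sub_cancel]
  have hcommon : ∀ M : ℕ, ∃ J : ℕ, (m' + 1 ≤ J) ∧ (∀ j, J ≤ j → M ≤ β j) := by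
    intro M
    obtain ⟨J0, hJ0⟩ := hβ M
    exact ⟨max J0 (m' + 1), by omega, fun j hj => le_of_lt (hJ0 j (by omega))⟩
  constructor
  · apply omega_closed A φ π n hn hπ hker hann
    intro M
    obtain ⟨J, hJm, hJM⟩ := hcommon M
    obtain ⟨q0, hq0⟩ := (cong_sol p A a F g hg m' J (by omega)).1
    obtain ⟨r1, hr1⟩ := hS1 J M hJM
    obtain ⟨r2, hr2⟩ := hS2 J M hJM
    refine ⟨q0, Hmat p A a (m' + 1) 0 0 * r1 + Hmat p A a (m' + 1) 0 1 * r2, ?_⟩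
    have ht1 : t1 p A a F g J
        = F 0 + ∑ l ∈ Finset.range J, -(X * g l * Hmat p A a (l + 1) 0 1) := rfl
    have ht2 : t2 p A a F g J
        = (F 1 - C (R := A) a * F 0) + ∑ l ∈ Finset.range J, (X * g l * Hmat p A a (l + 1) 0 0) := rfl
    linear_combination hq0 + Hmat p A a (m' + 1) 0 0 * hr1 + Hmat p A a (m' + 1) 0 1 * hr2
      - Hmat p A a (m' + 1) 0 0 * ht1 - Hmat p A a (m' + 1) 0 1 * ht2
  · apply omega_closed A φ π n hn hπ hker hann
    intro M
    obtain ⟨J, hJm, hJM⟩ := hcommon M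
    obtain ⟨q0, hq0⟩ := (cong_sol p A a F g hg m' J (by omega)).2
    obtain ⟨r1, hr1⟩ := hS1 J M hJM
    obtain ⟨r2, hr2⟩ := hS2 J M hJM
    refine ⟨q0, Hmat p A a (m' + 1) 1 0 * r1 + Hmat p A a (m' + 1) 1 1 * r2, ?_⟩
    have ht1 : t1 p A a F g J
        = F 0 + ∑ l ∈ Finset.range J, -(X * g l * Hmat p A a (l + 1) 0 1) := rfl
    have ht2 : t2 p A a F g J
        = (F 1 - C (R := A) a * F 0) + ∑ l ∈ Finset.range J, (X * g l * Hmat p A a (l + 1) 0 0) := rfl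
    linear_combination hq0 + Hmat p A a (m' + 1) 1 0 * hr1 + Hmat p A a (m' + 1) 1 1 * hr2
      - Hmat p A a (m' + 1) 1 0 * ht1 - Hmat p A a (m' + 1) 1 1 * ht2

end Main


lemma good_iff_mulVec (F : ℕ → PowerSeries A) (w : PowerSeries A × PowerSeries A) :
    (∀ m : ℕ, 1 ≤ m → ∀ i : Fin 2,
      omegaPS p A m ∣ ((Hmat p A a m).mulVec ![w.1, w.2] i -
        ![F m, -(PhiPS p A m * F (m - 1))] i)) ↔ Good p A a F w := by
  constructor
  · intro h m hm
    have h0 := h m hm 0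
    have h1 := h m hm 1
    constructor
    · simpa [Matrix.mulVec, dotProduct, Fin.sum_univ_two] using h0
    · simpa [Matrix.mulVec, dotProduct, Fin.sum_univ_two, sub_neg_eq_add] using h1
  · intro h m hm i
    obtain ⟨g1, g2⟩ := h m hm
    fin_cases i
    · simpa [Matrix.mulVec, dotProduct, Fin.sum_univ_two] using g1
    · simpa [Matrix.mulVec, dotProduct, Fin.sum_univ_two, sub_neg_eq_add] using g2

end SFD

theorem sharp_flat_decomposition_mod'
    (p : ℕ) (hp : p.Prime)
    (𝕆 : Type*) [CommRing 𝕆] [IsDomain 𝕆] [IsDiscreteValuationRing 𝕆]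
    (ϖ : 𝕆) (hϖ : Irreducible ϖ) (hpϖ : ϖ ∣ (p : 𝕆))
    (n : ℕ) (hn : 1 ≤ n) (a : 𝕆) (ha : ϖ ∣ a)
    (F : ℕ → PowerSeries (𝕆 ⧸ Ideal.span {ϖ ^ n}))
    (hF : NormCompat p (𝕆 ⧸ Ideal.span {ϖ ^ n})
      (Ideal.Quotient.mk (Ideal.span {ϖ ^ n}) a) F) :
    ∃! FP : PowerSeries (𝕆 ⧸ Ideal.span {ϖ ^ n}) × PowerSeries (𝕆 ⧸ Ideal.span {ϖ ^ n}),
      ∀ m : ℕ, 1 ≤ m → ∀ i : Fin 2,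
        omegaPS p (𝕆 ⧸ Ideal.span {ϖ ^ n}) m ∣
          ((Hmat p (𝕆 ⧸ Ideal.span {ϖ ^ n})
              (Ideal.Quotient.mk (Ideal.span {ϖ ^ n}) a) m).mulVec ![FP.1, FP.2] i -
            ![F m, -(PhiPS p (𝕆 ⧸ Ideal.span {ϖ ^ n}) m * F (m - 1))] i) := by
  haveI hpfact : Fact p.Prime := ⟨hp⟩
  haveI hmax : (Ideal.span {ϖ}).IsMaximal :=
    PrincipalIdealRing.isMaximal_of_irreducible hϖ
  letI : Field (𝕆 ⧸ Ideal.span {ϖ}) := Ideal.Quotient.field (Ideal.span {ϖ})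
  have hp0 : (p : 𝕆 ⧸ Ideal.span {ϖ}) = 0 := by
    rw [← map_natCast (Ideal.Quotient.mk (Ideal.span {ϖ})) p]
    exact Ideal.Quotient.eq_zero_iff_mem.mpr (Ideal.mem_span_singleton.mpr hpϖ)
  haveI hchar : CharP (𝕆 ⧸ Ideal.span {ϖ}) p := by
    have hdvd : ringChar (𝕆 ⧸ Ideal.span {ϖ}) ∣ p := ringChar.dvd hp0
    rcases (hp.eq_one_or_self_of_dvd _ hdvd) with h1 | hpe
    · exfalso
      have hz := CharP.cast_eq_zero (𝕆 ⧸ Ideal.span {ϖ}) (ringChar (𝕆 ⧸ Ideal.span {ϖ}))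
      rw [h1] at hz
      simpa using hz
    · rw [← hpe]
      exact ringChar.charP _
  have hle : Ideal.span {ϖ ^ n} ≤ Ideal.span {ϖ} :=
    Ideal.span_singleton_le_span_singleton.mpr (dvd_pow_self ϖ (by omega))
  set φ : (𝕆 ⧸ Ideal.span {ϖ ^ n}) →+* (𝕆 ⧸ Ideal.span {ϖ}) :=
    Ideal.Quotient.factor hle with hφ
  set π : 𝕆 ⧸ Ideal.span {ϖ ^ n} := Ideal.Quotient.mk (Ideal.span {ϖ ^ n}) ϖ with hπdef
  set abar : 𝕆 ⧸ Ideal.span {ϖ ^ n} := Ideal.Quotient.mk (Ideal.span {ϖ ^ n}) a with habar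
  have hπn : π ^ n = 0 := by
    rw [hπdef, ← map_pow]
    exact Ideal.Quotient.eq_zero_iff_mem.mpr (Ideal.mem_span_singleton_self _)
  have hker : ∀ x : 𝕆 ⧸ Ideal.span {ϖ ^ n}, φ x = 0 → π ∣ x := by
    intro x hx
    obtain ⟨y, rfl⟩ := Ideal.Quotient.mk_surjective x
    rw [hφ, Ideal.Quotient.factor_mk] at hx
    obtain ⟨z, hz⟩ := Ideal.mem_span_singleton.mp (Ideal.Quotient.eq_zero_iff_mem.mp hx)
    exact ⟨Ideal.Quotient.mk _ z, by rw [hz, map_mul]⟩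
  have hann : ∀ (i : ℕ) (x : 𝕆 ⧸ Ideal.span {ϖ ^ n}), i < n → π ^ i * x = 0 → φ x = 0 := by
    intro i x hi hx
    obtain ⟨y, rfl⟩ := Ideal.Quotient.mk_surjective x
    rw [hπdef, ← map_pow, ← map_mul] at hx
    obtain ⟨c, hc⟩ := Ideal.mem_span_singleton.mp (Ideal.Quotient.eq_zero_iff_mem.mp hx)
    have hy : y = ϖ ^ (n - i) * c := by
      have hsplit : ϖ ^ n = ϖ ^ i * ϖ ^ (n - i) := by
        rw [← pow_add]; congr 1; omega
      refine mul_left_cancel₀ (pow_ne_zero i hϖ.ne_zero) ?_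
      rw [hc, hsplit]; ring
    rw [hφ, Ideal.Quotient.factor_mk]
    refine Ideal.Quotient.eq_zero_iff_mem.mpr (Ideal.mem_span_singleton.mpr ?_)
    rw [hy]
    exact dvd_mul_of_dvd_left (dvd_pow_self ϖ (by omega)) c
  have haR : π ∣ abar := by
    obtain ⟨b, hb⟩ := ha
    exact ⟨Ideal.Quotient.mk _ b, by rw [habar, hπdef, hb, map_mul]⟩
  have hpR : π ∣ (p : 𝕆 ⧸ Ideal.span {ϖ ^ n}) := by
    obtain ⟨b, hb⟩ := hpϖ
    refine ⟨Ideal.Quotient.mk _ b, ?_⟩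
    rw [hπdef, ← map_mul, ← hb, map_natCast]
  obtain ⟨w, hw⟩ := SFD.exists_good (A := 𝕆 ⧸ Ideal.span {ϖ ^ n}) hpfact φ π abar (by omega) hπn hker hann haR hpR F hF
  refine ⟨w, ?_, ?_⟩
  · exact (SFD.good_iff_mulVec p (𝕆 ⧸ Ideal.span {ϖ ^ n}) abar F w).mpr hw
  · intro y hy
    exact SFD.uniq_aux (A := 𝕆 ⧸ Ideal.span {ϖ ^ n}) hpfact φ π abar (by omega) hπn hker hann haR hpR F y w
      ((SFD.good_iff_mulVec p (𝕆 ⧸ Ideal.span {ϖ ^ n}) abar F y).mp hy) hw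


/-- Theorem 3.3 of the paper, case `R = Λ/(ϖⁿ)`: let `n ≥ 1`, let `ā`
be the image in `𝕆/ϖⁿ𝕆` of `a ∈ 𝕆` with `ϖ ∣ a`, and let `(F_m)` be a sequence in
`R_n = (𝕆/ϖⁿ𝕆)⟦X⟧` with `F_{m+1} ≡ ā·F_m − Φ̄_m·F_{m−1} (mod ω̄_m·R_n)` for all
`m ≥ 1`. Then there is a unique pair `(F^♯, F^♭) ∈ R_n × R_n` with
`H̄_m·(F^♯,F^♭)ᵀ ≡ (F_m, −Φ̄_m·F_{m−1})ᵀ (mod ω̄_m·R_n)` for every `m ≥ 1`. -/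
theorem sharp_flat_decomposition_mod
    (p : ℕ) (hp : p.Prime) (hp5 : 5 ≤ p)
    (𝕆 : Type*) [CommRing 𝕆] [IsDomain 𝕆] [IsDiscreteValuationRing 𝕆] [CharZero 𝕆]
    (ϖ : 𝕆) (hϖ : Irreducible ϖ) (hpϖ : ϖ ∣ (p : 𝕆))
    (n : ℕ) (hn : 1 ≤ n) (a : 𝕆) (ha : ϖ ∣ a)
    (F : ℕ → PowerSeries (𝕆 ⧸ Ideal.span {ϖ ^ n}))
    (hF : NormCompat p (𝕆 ⧸ Ideal.span {ϖ ^ n})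
      (Ideal.Quotient.mk (Ideal.span {ϖ ^ n}) a) F) :
    ∃! FP : PowerSeries (𝕆 ⧸ Ideal.span {ϖ ^ n}) × PowerSeries (𝕆 ⧸ Ideal.span {ϖ ^ n}),
      ∀ m : ℕ, 1 ≤ m → ∀ i : Fin 2,
        omegaPS p (𝕆 ⧸ Ideal.span {ϖ ^ n}) m ∣
          ((Hmat p (𝕆 ⧸ Ideal.span {ϖ ^ n})
              (Ideal.Quotient.mk (Ideal.span {ϖ ^ n}) a) m).mulVec ![FP.1, FP.2] i -
            ![F m, -(PhiPS p (𝕆 ⧸ Ideal.span {ϖ ^ n}) m * F (m - 1))] i) := by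
  exact sharp_flat_decomposition_mod' p hp 𝕆 ϖ hϖ hpϖ n hn a ha F hF
end
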